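/- arXiv:1009.5632 — 5 statements merged into one kernel-verified Lean document; each statement's English description precedes it below -/
import Mathlib

section
/- With u_± = (1−ξ²) + (x−y)/2 ± i√Δ where Δ = (1−ξ²)(ξ²−xy) − (x−y)²/4 ≥ 0, the following modulus identities hold: |u_±|² = (1−ξ²)(1+x)(1−y), |u_± − x + y|² = (1−ξ²)(1−x)(1+y), |1+x−u_±|² = ξ²(1+x)(1+y), and |1−y−u_±|² = ξ²(1−x)(1−y). -/
open Complex

/-- Modulus identities for `u_± = (1-ξ²) + (x-y)/2 ± i√Δ`:
`|u_±|² = (1-ξ²)(1+x)(1-y)`, `|u_± - x + y|² = (1-ξ²)(1-x)(1+y)`,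
`|1+x-u_±|² = ξ²(1+x)(1+y)`, `|1-y-u_±|² = ξ²(1-x)(1-y)`. -/
theorem stmt2 (x y ξ : ℝ) (hx : x ∈ Set.Ioo (-1 : ℝ) 1) (hy : y ∈ Set.Ioo (-1 : ℝ) 1)
    (hξ : ξ ∈ Set.Ioo (0 : ℝ) 1)
    (Δ : ℝ) (hΔdef : Δ = (1 - ξ ^ 2) * (ξ ^ 2 - x * y) - (x - y) ^ 2 / 4)
    (hΔ : 0 ≤ Δ) :
    ∀ ε : ℝ, (ε = 1 ∨ ε = -1) →
      ∀ u : ℂ, u = ((1 - ξ ^ 2 : ℝ) : ℂ) + ((x - y) / 2 : ℝ)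
          + ε * Complex.I * Real.sqrt Δ →
        ‖u‖ ^ 2 = (1 - ξ ^ 2) * (1 + x) * (1 - y) ∧
        ‖u - x + y‖ ^ 2 = (1 - ξ ^ 2) * (1 - x) * (1 + y) ∧
        ‖1 + x - u‖ ^ 2 = ξ ^ 2 * (1 + x) * (1 + y) ∧
        ‖1 - y - u‖ ^ 2 = ξ ^ 2 * (1 - x) * (1 - y) := by
  intro ε hε u hu
  have hs : Real.sqrt Δ ^ 2 = Δ := Real.sq_sqrt hΔ
  have hε2 : ε ^ 2 = 1 := by rcases hε with h | h <;> simp [h]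
  subst hu hΔdef
  refine ⟨?_, ?_, ?_, ?_⟩ <;>
  · rw [Complex.sq_norm, Complex.normSq_apply]
    simp only [Complex.add_re, Complex.add_im, Complex.sub_re, Complex.sub_im,
      Complex.ofReal_re, Complex.ofReal_im, Complex.mul_re, Complex.mul_im,
      Complex.I_re, Complex.I_im, Complex.one_re, Complex.one_im]
    nlinarith [hs, hε2]
end

section
/- For x, y ∈ (−1,1), ξ ∈ (0,1) with Δ = (1−ξ²)(ξ²−xy) − (x−y)²/4 ≥ 0 and u_± = (1−ξ²) + (x−y)/2 ± i√Δ, the real part of the function f(x,y,u_±) (obtained by summing (2+x−y)ln ξ + (y−x)ln η with η² = 1−ξ², the four terms ½(1±x)ln(1±x), ½(1±y)ln(1±y), minus (1+x)ln|1+x−u_±|, minus (1−y)ln|1−y−u_±|, minus (y−x)ln|u_±−x+y|) equals zero. -/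
open Complex

/-- The real part of `f(x,y,u_±)` vanishes: the combination of logarithms
`(2+x-y)ln ξ + (y-x)ln η + ½(1-x)ln(1-x) + ½(1+x)ln(1+x) + ½(1-y)ln(1-y)
 + ½(1+y)ln(1+y) - (1+x)ln|1+x-u_±| - (1-y)ln|1-y-u_±| - (y-x)ln|u_±-x+y|`
equals zero, where `η = √(1-ξ²)` and `u_± = (1-ξ²) + (x-y)/2 ± i√Δ`. -/
theorem stmt3 (x y ξ : ℝ) (hx : x ∈ Set.Ioo (-1 : ℝ) 1) (hy : y ∈ Set.Ioo (-1 : ℝ) 1)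
    (hξ : ξ ∈ Set.Ioo (0 : ℝ) 1)
    (η : ℝ) (hη : η = Real.sqrt (1 - ξ ^ 2))
    (Δ : ℝ) (hΔdef : Δ = (1 - ξ ^ 2) * (ξ ^ 2 - x * y) - (x - y) ^ 2 / 4)
    (hΔ : 0 ≤ Δ) :
    ∀ ε : ℝ, (ε = 1 ∨ ε = -1) →
      ∀ u : ℂ, u = ((1 - ξ ^ 2 : ℝ) : ℂ) + ((x - y) / 2 : ℝ)
          + ε * Complex.I * Real.sqrt Δ →
        (2 + x - y) * Real.log ξ + (y - x) * Real.log η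
          + (1 - x) / 2 * Real.log (1 - x) + (1 + x) / 2 * Real.log (1 + x)
          + (1 - y) / 2 * Real.log (1 - y) + (1 + y) / 2 * Real.log (1 + y)
          - (1 + x) * Real.log (‖(1 + x - u : ℂ)‖)
          - (1 - y) * Real.log (‖(1 - y - u : ℂ)‖)
          - (y - x) * Real.log (‖(u - x + y : ℂ)‖) = 0 := by
  intro ε hε u hu
  have hε2 : ε ^ 2 = 1 := by rcases hε with h | h <;> subst h <;> norm_num
  have hs : Real.sqrt Δ ^ 2 = Δ := Real.sq_sqrt hΔ
  have hx1 : (0:ℝ) < 1 + x := by linarith [hx.1]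
  have hx2 : (0:ℝ) < 1 - x := by linarith [hx.2]
  have hy1 : (0:ℝ) < 1 + y := by linarith [hy.1]
  have hy2 : (0:ℝ) < 1 - y := by linarith [hy.2]
  have hξ0 : (0:ℝ) < ξ := hξ.1
  have hξ1 : (0:ℝ) < 1 - ξ ^ 2 := by nlinarith [hξ.1, hξ.2]
  subst hu
  have h1 : Complex.normSq (1 + x - (((1 - ξ ^ 2 : ℝ) : ℂ) + ((x - y) / 2 : ℝ)
      + ε * Complex.I * Real.sqrt Δ)) = ξ ^ 2 * (1 + x) * (1 + y) := by
    simp [Complex.normSq_apply, Complex.add_re, Complex.add_im, Complex.sub_re,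
      Complex.sub_im, Complex.mul_re, Complex.mul_im, ← Complex.ofReal_pow]
    linear_combination (Real.sqrt Δ ^ 2) * hε2 + hΔdef + hs
  have h2 : Complex.normSq (1 - y - (((1 - ξ ^ 2 : ℝ) : ℂ) + ((x - y) / 2 : ℝ)
      + ε * Complex.I * Real.sqrt Δ)) = ξ ^ 2 * (1 - x) * (1 - y) := by
    simp [Complex.normSq_apply, Complex.add_re, Complex.add_im, Complex.sub_re,
      Complex.sub_im, Complex.mul_re, Complex.mul_im, ← Complex.ofReal_pow]
    linear_combination (Real.sqrt Δ ^ 2) * hε2 + hΔdef + hs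
  have h3 : Complex.normSq ((((1 - ξ ^ 2 : ℝ) : ℂ) + ((x - y) / 2 : ℝ)
      + ε * Complex.I * Real.sqrt Δ) - x + y) = (1 - ξ ^ 2) * (1 - x) * (1 + y) := by
    simp [Complex.normSq_apply, Complex.add_re, Complex.add_im, Complex.sub_re,
      Complex.sub_im, Complex.mul_re, Complex.mul_im, ← Complex.ofReal_pow]
    linear_combination (Real.sqrt Δ ^ 2) * hε2 + hΔdef + hs
  have labs : ∀ z : ℂ, Real.log ‖z‖ = Real.log (Complex.normSq z) / 2 := by
    intro z
    rw [← Complex.sq_norm, Real.log_pow]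
    push_cast
    ring
  have e1 : Real.log (ξ ^ 2 * (1 + x) * (1 + y))
      = 2 * Real.log ξ + Real.log (1 + x) + Real.log (1 + y) := by
    rw [Real.log_mul (by positivity) hy1.ne', Real.log_mul (by positivity) hx1.ne',
      Real.log_pow]
    push_cast; ring
  have e2 : Real.log (ξ ^ 2 * (1 - x) * (1 - y))
      = 2 * Real.log ξ + Real.log (1 - x) + Real.log (1 - y) := by
    rw [Real.log_mul (by positivity) hy2.ne', Real.log_mul (by positivity) hx2.ne',
      Real.log_pow]
    push_cast; ring
  have e3 : Real.log ((1 - ξ ^ 2) * (1 - x) * (1 + y))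
      = Real.log (1 - ξ ^ 2) + Real.log (1 - x) + Real.log (1 + y) := by
    rw [Real.log_mul (by positivity) hy1.ne', Real.log_mul hξ1.ne' hx2.ne']
  rw [labs, labs, labs, h1, h2, h3, e1, e2, e3, hη, Real.log_sqrt hξ1.le]
  ring
end

section
/- In the diagonal case y = x with Δ = (1−ξ²)(ξ²−x²) > 0 and x ∈ (−1,1), ξ ∈ (0,1), define iφ(x) = ln[(2ξ²−1−x² + 2i√Δ)/(1−x²)] and i(ψ−ω)(x) = ln[(√(ξ²−x²) − i x√(1−ξ²))²/(ξ²(1−x²))]. Then φ'(x) = 2x√(1−ξ²)/((1−x²)√(ξ²−x²)) and (ψ−ω)'(x) = −2√(1−ξ²)/((1−x²)√(ξ²−x²)); in particular φ'(x) + x·(ψ−ω)'(x) = 0. -/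
open Complex

-- closed form for φ on the good set
lemma phi_closed (ξ y : ℝ) (h0ξ : 0 < ξ) (h1ξ : ξ < 1) (hy1 : -1 < y) (hy2 : y < 1)
    (hyx : y ^ 2 < ξ ^ 2) :
    (Complex.log ((((2 * ξ ^ 2 - 1 - y ^ 2 : ℝ) : ℂ)
        + 2 * Complex.I * Real.sqrt ((1 - ξ ^ 2) * (ξ ^ 2 - y ^ 2)))
      / ((1 - y ^ 2 : ℝ) : ℂ))).im
    = Real.arccos ((2 * ξ ^ 2 - 1 - y ^ 2) / (1 - y ^ 2)) := by
  have hy : (0:ℝ) < 1 - y ^ 2 := by nlinarith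
  have hs : (0:ℝ) < 1 - ξ ^ 2 := by nlinarith
  have hr : (0:ℝ) < ξ ^ 2 - y ^ 2 := by nlinarith
  set a : ℝ := (2 * ξ ^ 2 - 1 - y ^ 2) / (1 - y ^ 2) with ha
  have ha1 : -1 < a := by
    rw [ha, lt_div_iff₀ hy]; nlinarith
  have ha2 : a < 1 := by
    rw [ha, div_lt_iff₀ hy]; nlinarith
  set θ := Real.arccos a with hθ
  have hcos : Real.cos θ = a := Real.cos_arccos ha1.le ha2.le
  have hΔ : Real.sqrt ((1 - ξ ^ 2) * (ξ ^ 2 - y ^ 2)) ^ 2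
      = (1 - ξ ^ 2) * (ξ ^ 2 - y ^ 2) := Real.sq_sqrt (by positivity)
  have hsin : Real.sin θ
      = 2 * Real.sqrt ((1 - ξ ^ 2) * (ξ ^ 2 - y ^ 2)) / (1 - y ^ 2) := by
    rw [hθ, Real.sin_arccos]
    have h1a : 1 - a ^ 2
        = (2 * Real.sqrt ((1 - ξ ^ 2) * (ξ ^ 2 - y ^ 2)) / (1 - y ^ 2)) ^ 2 := by
      have hsr : (Real.sqrt (1 - ξ ^ 2) * Real.sqrt (ξ ^ 2 - y ^ 2)) ^ 2
          = (1 - ξ ^ 2) * (ξ ^ 2 - y ^ 2) := by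
        rw [mul_pow, Real.sq_sqrt hs.le, Real.sq_sqrt hr.le]
      rw [ha, Real.sqrt_mul hs.le]; field_simp
      linear_combination (-4:ℝ) * hsr
    rw [h1a, Real.sqrt_sq (by positivity)]
  have hz : (((2 * ξ ^ 2 - 1 - y ^ 2 : ℝ) : ℂ)
        + 2 * Complex.I * Real.sqrt ((1 - ξ ^ 2) * (ξ ^ 2 - y ^ 2)))
      / ((1 - y ^ 2 : ℝ) : ℂ)
      = Complex.cos θ + Complex.sin θ * Complex.I := by
    rw [← Complex.ofReal_cos, ← Complex.ofReal_sin, hcos, hsin, ha]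
    have hy' : ((1 - y ^ 2 : ℝ) : ℂ) ≠ 0 := by
      exact_mod_cast (ne_of_gt hy)
    push_cast
    field_simp
  rw [hz, Complex.log_im, Complex.arg_cos_add_sin_mul_I]
  constructor
  · have := Real.arccos_nonneg a
    have := Real.pi_pos
    linarith
  · exact Real.arccos_le_pi a

lemma psi_closed (ξ y : ℝ) (h0ξ : 0 < ξ) (h1ξ : ξ < 1) (hy1 : -1 < y) (hy2 : y < 1)
    (hyx : y ^ 2 < ξ ^ 2) :
    (Complex.log ((((Real.sqrt (ξ ^ 2 - y ^ 2) : ℝ) : ℂ)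
          - Complex.I * y * Real.sqrt (1 - ξ ^ 2)) ^ 2
      / ((ξ ^ 2 * (1 - y ^ 2) : ℝ) : ℂ))).im
    = -2 * Real.arctan (y * Real.sqrt (1 - ξ ^ 2) / Real.sqrt (ξ ^ 2 - y ^ 2)) := by
  have hy : (0:ℝ) < 1 - y ^ 2 := by nlinarith
  have hsp : (0:ℝ) < 1 - ξ ^ 2 := by nlinarith
  have hrp : (0:ℝ) < ξ ^ 2 - y ^ 2 := by nlinarith
  set s := Real.sqrt (1 - ξ ^ 2) with hsdef
  set r := Real.sqrt (ξ ^ 2 - y ^ 2) with hrdef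
  have hs2 : s ^ 2 = 1 - ξ ^ 2 := Real.sq_sqrt hsp.le
  have hr2 : r ^ 2 = ξ ^ 2 - y ^ 2 := Real.sq_sqrt hrp.le
  have hs0 : 0 < s := Real.sqrt_pos.mpr hsp
  have hr0 : 0 < r := Real.sqrt_pos.mpr hrp
  set t : ℝ := y * s / r with htdef
  have key : (1 + t ^ 2) * r ^ 2 = ξ ^ 2 * (1 - y ^ 2) := by
    rw [htdef]
    field_simp
    linear_combination hr2 + y ^ 2 * hs2
  have hden : (0:ℝ) < ξ ^ 2 * (1 - y ^ 2) := by positivity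
  have h1t : (0:ℝ) < 1 + t ^ 2 := by positivity
  set θ : ℝ := -2 * Real.arctan t with hθ
  -- cos θ and sin θ
  have hsq : Real.sqrt (1 + t ^ 2) ^ 2 = 1 + t ^ 2 := Real.sq_sqrt h1t.le
  have hcos : Real.cos θ = (1 - t ^ 2) / (1 + t ^ 2) := by
    rw [hθ]
    have : (-2 : ℝ) * Real.arctan t = 2 * Real.arctan t * (-1) := by ring
    rw [this, mul_neg_one, Real.cos_neg, Real.cos_two_mul, Real.cos_arctan]
    rw [div_pow, one_pow, hsq]
    field_simp
    ring
  have hsin : Real.sin θ = -(2 * t / (1 + t ^ 2)) := by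
    rw [hθ]
    have : (-2 : ℝ) * Real.arctan t = 2 * Real.arctan t * (-1) := by ring
    rw [this, mul_neg_one, Real.sin_neg, Real.sin_two_mul, Real.sin_arctan, Real.cos_arctan]
    have h0 : Real.sqrt (1 + t ^ 2) ≠ 0 := by positivity
    field_simp
    rw [hsq]
  have ht2 : t ^ 2 * r ^ 2 = y ^ 2 * s ^ 2 := by rw [htdef]; field_simp
  have htr : t * r = y * s := by rw [htdef]; field_simp
  -- the complex number equals cos θ + sin θ * I
  have hre : (1 - t ^ 2) / (1 + t ^ 2) = (r ^ 2 - y ^ 2 * s ^ 2) / (ξ ^ 2 * (1 - y ^ 2)) := by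
    rw [div_eq_div_iff (by positivity) (by positivity)]
    linear_combination (-(1 - t ^ 2)) * key - (1 + t ^ 2) * ht2
  have him : -(2 * t / (1 + t ^ 2)) = -(2 * y * s * r / (ξ ^ 2 * (1 - y ^ 2))) := by
    congr 1
    rw [div_eq_div_iff (by positivity) (by positivity)]
    linear_combination (-2*t) * key + (2*(1+t^2)*r) * htr
  have hz : (((r : ℝ) : ℂ) - Complex.I * y * ((s : ℝ) : ℂ)) ^ 2
      / ((ξ ^ 2 * (1 - y ^ 2) : ℝ) : ℂ)
      = Complex.cos θ + Complex.sin θ * Complex.I := by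
    rw [← Complex.ofReal_cos, ← Complex.ofReal_sin, hcos, hsin, hre, him]
    have hden' : ((ξ ^ 2 * (1 - y ^ 2) : ℝ) : ℂ) ≠ 0 := by
      exact_mod_cast hden.ne'
    push_cast
    field_simp
    congr 1
    linear_combination (y:ℂ) ^ 2 * (s:ℂ) ^ 2 * Complex.I_sq
  rw [hz, Complex.log_im, Complex.arg_cos_add_sin_mul_I]
  have h1 := Real.arctan_lt_pi_div_two t
  have h2 := Real.neg_pi_div_two_lt_arctan t
  constructor
  · rw [hθ]; linarith
  · rw [hθ]; linarith

/-- Diagonal case `y = x`: with `Δ(x) = (1-ξ²)(ξ²-x²)`, the angles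
`φ(x) = Im log[(2ξ²-1-x² + 2i√Δ)/(1-x²)]` and
`(ψ-ω)(x) = Im log[(√(ξ²-x²) - i x√(1-ξ²))²/(ξ²(1-x²))]` satisfy
`φ'(x) = 2x√(1-ξ²)/((1-x²)√(ξ²-x²))`,
`(ψ-ω)'(x) = -2√(1-ξ²)/((1-x²)√(ξ²-x²))`, hence `φ' + x·(ψ-ω)' = 0`. -/
theorem stmt8 (ξ : ℝ) (hξ : ξ ∈ Set.Ioo (0 : ℝ) 1)
    (φ ψω : ℝ → ℝ)
    (hφ : ∀ x : ℝ, φ x =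
      (Complex.log ((((2 * ξ ^ 2 - 1 - x ^ 2 : ℝ) : ℂ)
          + 2 * Complex.I * Real.sqrt ((1 - ξ ^ 2) * (ξ ^ 2 - x ^ 2)))
        / ((1 - x ^ 2 : ℝ) : ℂ))).im)
    (hψω : ∀ x : ℝ, ψω x =
      (Complex.log ((((Real.sqrt (ξ ^ 2 - x ^ 2) : ℝ) : ℂ)
            - Complex.I * x * Real.sqrt (1 - ξ ^ 2)) ^ 2
        / ((ξ ^ 2 * (1 - x ^ 2) : ℝ) : ℂ))).im) :
    ∀ x : ℝ, x ∈ Set.Ioo (-1 : ℝ) 1 → x ^ 2 < ξ ^ 2 →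
      deriv φ x = 2 * x * Real.sqrt (1 - ξ ^ 2)
          / ((1 - x ^ 2) * Real.sqrt (ξ ^ 2 - x ^ 2)) ∧
      deriv ψω x = -(2 * Real.sqrt (1 - ξ ^ 2)
          / ((1 - x ^ 2) * Real.sqrt (ξ ^ 2 - x ^ 2))) ∧
      deriv φ x + x * deriv ψω x = 0 := by
  obtain ⟨hξ0, hξ1⟩ := hξ
  intro x hx hx2
  obtain ⟨hx1, hx1'⟩ := hx
  have hy : (0:ℝ) < 1 - x ^ 2 := by nlinarith
  have hsp : (0:ℝ) < 1 - ξ ^ 2 := by nlinarith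
  have hrp : (0:ℝ) < ξ ^ 2 - x ^ 2 := by nlinarith
  set s := Real.sqrt (1 - ξ ^ 2) with hsdef
  set r := Real.sqrt (ξ ^ 2 - x ^ 2) with hrdef
  have hs2 : s ^ 2 = 1 - ξ ^ 2 := Real.sq_sqrt hsp.le
  have hr2 : r ^ 2 = ξ ^ 2 - x ^ 2 := Real.sq_sqrt hrp.le
  have hs0 : 0 < s := Real.sqrt_pos.mpr hsp
  have hr0 : 0 < r := Real.sqrt_pos.mpr hrp
  -- the open set where the closed forms hold
  have hSopen : IsOpen (Set.Ioo (-1:ℝ) 1 ∩ {y : ℝ | y ^ 2 < ξ ^ 2}) :=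
    isOpen_Ioo.inter (isOpen_lt (by continuity) continuous_const)
  have hxS : x ∈ Set.Ioo (-1:ℝ) 1 ∩ {y : ℝ | y ^ 2 < ξ ^ 2} :=
    ⟨⟨hx1, hx1'⟩, hx2⟩
  -- φ agrees with its closed form near x
  have hφF : φ =ᶠ[nhds x]
      (fun y : ℝ => Real.arccos ((2 * ξ ^ 2 - 1 - y ^ 2) / (1 - y ^ 2))) := by
    filter_upwards [hSopen.mem_nhds hxS] with y hy
    exact (hφ y).trans (phi_closed ξ y hξ0 hξ1 hy.1.1 hy.1.2 hy.2)
  have hψG : ψω =ᶠ[nhds x]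
      (fun y : ℝ => -2 * Real.arctan (y * s / Real.sqrt (ξ ^ 2 - y ^ 2))) := by
    filter_upwards [hSopen.mem_nhds hxS] with y hy
    exact (hψω y).trans (psi_closed ξ y hξ0 hξ1 hy.1.1 hy.1.2 hy.2)
  -- derivative of F = arccos ∘ u
  have hnum : HasDerivAt (fun y : ℝ => 2 * ξ ^ 2 - 1 - y ^ 2) (-(2 * x)) x := by
    simpa using (hasDerivAt_pow 2 x).const_sub (2 * ξ ^ 2 - 1)
  have hden : HasDerivAt (fun y : ℝ => 1 - y ^ 2) (-(2 * x)) x := by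
    simpa using (hasDerivAt_pow 2 x).const_sub 1
  have hu : HasDerivAt (fun y : ℝ => (2 * ξ ^ 2 - 1 - y ^ 2) / (1 - y ^ 2))
      ((-(2 * x) * (1 - x ^ 2) - (2 * ξ ^ 2 - 1 - x ^ 2) * (-(2 * x))) / (1 - x ^ 2) ^ 2) x :=
    hnum.div hden hy.ne'
  set a : ℝ := (2 * ξ ^ 2 - 1 - x ^ 2) / (1 - x ^ 2) with ha
  have ha1 : -1 < a := by rw [ha, lt_div_iff₀ hy]; nlinarith
  have ha2 : a < 1 := by rw [ha, div_lt_iff₀ hy]; nlinarith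
  have hF : HasDerivAt (fun y : ℝ => Real.arccos ((2 * ξ ^ 2 - 1 - y ^ 2) / (1 - y ^ 2)))
      (-(1 / Real.sqrt (1 - a ^ 2)) *
        ((-(2 * x) * (1 - x ^ 2) - (2 * ξ ^ 2 - 1 - x ^ 2) * (-(2 * x))) / (1 - x ^ 2) ^ 2)) x :=
    by have := (Real.hasDerivAt_arccos ha1.ne' ha2.ne).comp x hu; exact this
  have hsqa : Real.sqrt (1 - a ^ 2) = 2 * s * r / (1 - x ^ 2) := by
    have hsr : (s * r) ^ 2 = (1 - ξ ^ 2) * (ξ ^ 2 - x ^ 2) := by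
      rw [mul_pow, hs2, hr2]
    have h1a : 1 - a ^ 2 = (2 * s * r / (1 - x ^ 2)) ^ 2 := by
      rw [ha]; field_simp; linear_combination (-4:ℝ) * hsr
    rw [h1a, Real.sqrt_sq (by positivity)]
  have hFval : -(1 / Real.sqrt (1 - a ^ 2)) *
      ((-(2 * x) * (1 - x ^ 2) - (2 * ξ ^ 2 - 1 - x ^ 2) * (-(2 * x))) / (1 - x ^ 2) ^ 2)
      = 2 * x * s / ((1 - x ^ 2) * r) := by
    rw [hsqa]
    field_simp
    linear_combination (-2 * x) * hs2
  -- derivative of G = -2 * arctan ∘ t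
  have hvin : HasDerivAt (fun y : ℝ => ξ ^ 2 - y ^ 2) (-(2 * x)) x := by
    simpa using (hasDerivAt_pow 2 x).const_sub (ξ ^ 2)
  have hv : HasDerivAt (fun y : ℝ => Real.sqrt (ξ ^ 2 - y ^ 2)) (-(2 * x) / (2 * r)) x :=
    hvin.sqrt hrp.ne'
  have hlin : HasDerivAt (fun y : ℝ => y * s) s x := by
    simpa using (hasDerivAt_id x).mul_const s
  have ht : HasDerivAt (fun y : ℝ => y * s / Real.sqrt (ξ ^ 2 - y ^ 2))
      ((s * r - x * s * (-(2 * x) / (2 * r))) / r ^ 2) x := hlin.div hv hr0.ne'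
  set t : ℝ := x * s / r with htdef
  have hG : HasDerivAt (fun y : ℝ => -2 * Real.arctan (y * s / Real.sqrt (ξ ^ 2 - y ^ 2)))
      (-2 * (1 / (1 + t ^ 2) * ((s * r - x * s * (-(2 * x) / (2 * r))) / r ^ 2))) x :=
    ((Real.hasDerivAt_arctan t).comp x ht).const_mul (-2)
  have key : (1 + t ^ 2) * r ^ 2 = ξ ^ 2 * (1 - x ^ 2) := by
    rw [htdef]; field_simp; linear_combination hr2 + x ^ 2 * hs2
  have hGval : -2 * (1 / (1 + t ^ 2) * ((s * r - x * s * (-(2 * x) / (2 * r))) / r ^ 2))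
      = -(2 * s / ((1 - x ^ 2) * r)) := by
    have h1t : (0:ℝ) < 1 + t ^ 2 := by positivity
    have h1t' : 1 + t ^ 2 = ξ ^ 2 * (1 - x ^ 2) / r ^ 2 :=
      (eq_div_iff (by positivity)).mpr key
    rw [h1t']
    field_simp
    ring_nf
    linear_combination (-1 : ℝ) * hr2
  have hdφ : deriv φ x = 2 * x * s / ((1 - x ^ 2) * r) := by
    rw [hφF.deriv_eq, hF.deriv, hFval]
  have hdψ : deriv ψω x = -(2 * s / ((1 - x ^ 2) * r)) := by
    rw [hψG.deriv_eq, hG.deriv, hGval]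
  refine ⟨?_, ?_, ?_⟩
  · rw [hdφ]
  · rw [hdψ]
  · rw [hdφ, hdψ]; ring
end

section
/- Let J, n, k ∈ ℝ³ with |n| = |k| = 1 and J·J = J². Define Δ(ξ²)·J² := (1−ξ²)ξ²J² + ξ²(n·J)(k·J) − ¼((n+k)·J)². Then at ξ²₊ = (1+(n·k))/2 one has J²Δ = ¼ (J·(n ∧ k))², where ∧ denotes the cross product. -/
open Matrix

/-- With `J²Δ(t) := (1-t)t(J·J) + t(n·J)(k·J) - ((n+k)·J)²/4`, at
`t = ξ²₊ = (1+(n·k))/2` one has `J²Δ = ¼ (J·(n ∧ k))²`. -/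
theorem stmt13 (J n k : Fin 3 → ℝ) (hn : n ⬝ᵥ n = 1) (hk : k ⬝ᵥ k = 1) :
    ∀ t : ℝ, t = (1 + n ⬝ᵥ k) / 2 →
      (1 - t) * t * (J ⬝ᵥ J) + t * (n ⬝ᵥ J) * (k ⬝ᵥ J) - ((n + k) ⬝ᵥ J) ^ 2 / 4
        = (J ⬝ᵥ (n ⨯₃ k)) ^ 2 / 4 := by
  intro t ht
  subst ht
  simp only [dotProduct, crossProduct, Fin.sum_univ_three, Pi.add_apply,
    Matrix.cons_val_zero, Matrix.cons_val_one, Matrix.head_cons,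
    Matrix.cons_val_two, Matrix.tail_cons, LinearMap.mk₂_apply] at *
  linear_combination
    (((n 0 * J 0 + n 1 * J 1 + n 2 * J 2) ^ 2
        - (J 0 * J 0 + J 1 * J 1 + J 2 * J 2)) / 4) * hk +
    (((k 0 * J 0 + k 1 * J 1 + k 2 * J 2) ^ 2
        - (J 0 * J 0 + J 1 * J 1 + J 2 * J 2) * (k 0 * k 0 + k 1 * k 1 + k 2 * k 2)) / 4) * hn
end

section
/- For real x ∈ (0,1) and ξ ∈ (0,1), the function g(x) = x ln ξ² + (1−x)ln(1−ξ²) + (1+x)ln(1+x) − (1−x)ln(1−x) − 2x ln(2x) attains its maximum on (0,1) at x* = ξ/√(4−3ξ²), and the maximum value is ln[(ξ + √(4−3ξ²))²/4], which is strictly positive. -/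
set_option maxHeartbeats 1000000 in
/-- `g(x) = x ln ξ² + (1-x)ln(1-ξ²) + (1+x)ln(1+x) - (1-x)ln(1-x) - 2x ln(2x)`
attains its maximum on `(0,1)` at `x* = ξ/√(4-3ξ²)`, with maximum value
`ln[(ξ + √(4-3ξ²))²/4] > 0`. -/
theorem stmt19 (ξ : ℝ) (hξ : ξ ∈ Set.Ioo (0 : ℝ) 1)
    (g : ℝ → ℝ)
    (hg : ∀ x : ℝ, g x = x * Real.log (ξ ^ 2) + (1 - x) * Real.log (1 - ξ ^ 2)
        + (1 + x) * Real.log (1 + x) - (1 - x) * Real.log (1 - x)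
        - 2 * x * Real.log (2 * x)) :
    ξ / Real.sqrt (4 - 3 * ξ ^ 2) ∈ Set.Ioo (0 : ℝ) 1 ∧
    IsMaxOn g (Set.Ioo (0 : ℝ) 1) (ξ / Real.sqrt (4 - 3 * ξ ^ 2)) ∧
    g (ξ / Real.sqrt (4 - 3 * ξ ^ 2))
      = Real.log ((ξ + Real.sqrt (4 - 3 * ξ ^ 2)) ^ 2 / 4) ∧
    0 < Real.log ((ξ + Real.sqrt (4 - 3 * ξ ^ 2)) ^ 2 / 4) := by
  obtain ⟨hξ0, hξ1⟩ := hξ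
  have hξ2 : ξ ^ 2 < 1 := by nlinarith
  set s := Real.sqrt (4 - 3 * ξ ^ 2) with hsdef
  have hs0 : (0:ℝ) < 4 - 3 * ξ ^ 2 := by nlinarith
  have hs2 : s ^ 2 = 4 - 3 * ξ ^ 2 := Real.sq_sqrt hs0.le
  have hsnn : 0 ≤ s := Real.sqrt_nonneg _
  have hs1 : 1 < s := by nlinarith
  have hslt2 : s < 2 := by nlinarith
  have hξs : ξ < s := by nlinarith
  have hspos : (0:ℝ) < s := by linarith
  have hxmem : ξ / s ∈ Set.Ioo (0:ℝ) 1 := ⟨div_pos hξ0 hspos, (div_lt_one hspos).2 hξs⟩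
  have hξ2pos : (0:ℝ) < 1 - ξ ^ 2 := by nlinarith
  -- derivative of g
  have hderiv : ∀ x ∈ Set.Ioo (0:ℝ) 1, HasDerivAt g
      (Real.log (ξ ^ 2) - Real.log (1 - ξ ^ 2) + Real.log (1 + x) + Real.log (1 - x)
        - 2 * Real.log (2 * x)) x := by
    intro x hx
    obtain ⟨hx0, hx1⟩ := hx
    have h1p : (0:ℝ) < 1 + x := by linarith
    have h1m : (0:ℝ) < 1 - x := by linarith
    have h2x : (0:ℝ) < 2 * x := by linarith
    have ha : HasDerivAt (fun y : ℝ => (1 + y) * Real.log (1 + y))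
        (Real.log (1 + x) + 1) x := by
      have h1 : HasDerivAt (fun y : ℝ => 1 + y) 1 x := by
        simpa using (hasDerivAt_id x).const_add 1
      have h2 : HasDerivAt (fun y : ℝ => Real.log (1 + y)) (1 / (1 + x)) x := by
        simpa [Function.comp_def] using (Real.hasDerivAt_log h1p.ne').comp x h1
      have := h1.mul h2
      refine this.congr_deriv ?_
      field_simp
    have hb : HasDerivAt (fun y : ℝ => (1 - y) * Real.log (1 - y))
        (-Real.log (1 - x) - 1) x := by
      have h1 : HasDerivAt (fun y : ℝ => 1 - y) (-1) x := (hasDerivAt_id x).const_sub 1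
      have h2 : HasDerivAt (fun y : ℝ => Real.log (1 - y)) (-(1 / (1 - x))) x := by
        have := (Real.hasDerivAt_log h1m.ne').comp x h1
        refine this.congr_deriv ?_
        simp
      have := h1.mul h2
      refine this.congr_deriv ?_
      field_simp
      ring
    have hc : HasDerivAt (fun y : ℝ => y * Real.log (2 * y))
        (Real.log (2 * x) + 1) x := by
      have h1 : HasDerivAt (fun y : ℝ => 2 * y) 2 x := by
        simpa using (hasDerivAt_id x).const_mul 2
      have h2 : HasDerivAt (fun y : ℝ => Real.log (2 * y)) ((1 / (2 * x)) * 2) x := by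
        simpa [Function.comp_def] using (Real.hasDerivAt_log h2x.ne').comp x h1
      have := (hasDerivAt_id x).mul h2
      refine this.congr_deriv ?_
      field_simp
      simp only [id_eq]
      ring
    have hlin : HasDerivAt (fun y : ℝ => y * Real.log (ξ ^ 2) + (1 - y) * Real.log (1 - ξ ^ 2))
        (Real.log (ξ ^ 2) - Real.log (1 - ξ ^ 2)) x := by
      have := ((hasDerivAt_id x).mul_const (Real.log (ξ ^ 2))).add
        (((hasDerivAt_id x).const_sub 1).mul_const (Real.log (1 - ξ ^ 2)))
      refine this.congr_deriv ?_
      ring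
    have hgfun : g = fun y : ℝ => (y * Real.log (ξ ^ 2) + (1 - y) * Real.log (1 - ξ ^ 2)
        + (1 + y) * Real.log (1 + y) - (1 - y) * Real.log (1 - y))
        - 2 * (y * Real.log (2 * y)) := by
      funext y
      rw [hg]
      ring
    rw [hgfun]
    have := ((hlin.add ha).sub hb).sub ((hc.const_mul 2))
    refine this.congr_deriv ?_
    ring
  -- sign of the derivative
  have hsign : ∀ x ∈ Set.Ioo (0:ℝ) 1,
      (x ≤ ξ / s → 0 ≤ Real.log (ξ ^ 2) - Real.log (1 - ξ ^ 2) + Real.log (1 + x)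
        + Real.log (1 - x) - 2 * Real.log (2 * x)) ∧
      (ξ / s ≤ x → Real.log (ξ ^ 2) - Real.log (1 - ξ ^ 2) + Real.log (1 + x)
        + Real.log (1 - x) - 2 * Real.log (2 * x) ≤ 0) := by
    intro x hx
    obtain ⟨hx0, hx1⟩ := hx
    have h1p : (0:ℝ) < 1 + x := by linarith
    have h1m : (0:ℝ) < 1 - x := by linarith
    have h2x : (0:ℝ) < 2 * x := by linarith
    have hA : (0:ℝ) < ξ ^ 2 * (1 + x) * (1 - x) := by positivity
    have hB : (0:ℝ) < (1 - ξ ^ 2) * (2 * x) * (2 * x) := by positivity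
    have hlogA : Real.log (ξ ^ 2 * (1 + x) * (1 - x))
        = Real.log (ξ ^ 2) + Real.log (1 + x) + Real.log (1 - x) := by
      rw [Real.log_mul (by positivity) h1m.ne', Real.log_mul (by positivity) h1p.ne']
    have hlogB : Real.log ((1 - ξ ^ 2) * (2 * x) * (2 * x))
        = Real.log (1 - ξ ^ 2) + 2 * Real.log (2 * x) := by
      rw [Real.log_mul (by positivity) h2x.ne', Real.log_mul hξ2pos.ne' h2x.ne']
      ring
    constructor
    · intro hle
      have hx2 : x ^ 2 * s ^ 2 ≤ ξ ^ 2 := by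
        have : x ≤ ξ / s := hle
        have hxs : x * s ≤ ξ := by
          rw [← le_div_iff₀ hspos]; exact this
        nlinarith [mul_nonneg hx0.le hsnn, mul_nonneg (sub_nonneg.2 hxs)
          (by positivity : (0:ℝ) ≤ ξ + x * s)]
      have hBA : (1 - ξ ^ 2) * (2 * x) * (2 * x) ≤ ξ ^ 2 * (1 + x) * (1 - x) := by
        nlinarith [hs2]
      have := Real.log_le_log hB hBA
      rw [hlogA, hlogB] at this
      linarith
    · intro hge
      have hx2 : ξ ^ 2 ≤ x ^ 2 * s ^ 2 := by
        have hxs : ξ ≤ x * s := by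
          rw [← div_le_iff₀ hspos] at *
          exact hge
        nlinarith [mul_nonneg hx0.le hsnn, mul_nonneg (sub_nonneg.2 hxs)
          (by positivity : (0:ℝ) ≤ ξ + x * s)]
      have hAB : ξ ^ 2 * (1 + x) * (1 - x) ≤ (1 - ξ ^ 2) * (2 * x) * (2 * x) := by
        nlinarith [hs2]
      have := Real.log_le_log hA hAB
      rw [hlogA, hlogB] at this
      linarith
  -- maximality
  have hmax : IsMaxOn g (Set.Ioo (0:ℝ) 1) (ξ / s) := by
    intro y hy
    obtain ⟨hy0, hy1⟩ := hy
    simp only [Set.mem_setOf_eq]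
    rcases le_total y (ξ / s) with hcase | hcase
    · have hsub : Set.Icc y (ξ / s) ⊆ Set.Ioo (0:ℝ) 1 := fun z hz =>
        ⟨lt_of_lt_of_le hy0 hz.1, lt_of_le_of_lt hz.2 hxmem.2⟩
      have hmono : MonotoneOn g (Set.Icc y (ξ / s)) := by
        apply monotoneOn_of_deriv_nonneg (convex_Icc _ _)
        · exact fun z hz => ((hderiv z (hsub hz)).continuousAt).continuousWithinAt
        · intro z hz
          rw [interior_Icc] at hz
          exact ((hderiv z (hsub ⟨hz.1.le, hz.2.le⟩)).differentiableAt).differentiableWithinAt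
        · intro z hz
          rw [interior_Icc] at hz
          have hzmem := hsub ⟨hz.1.le, hz.2.le⟩
          rw [(hderiv z hzmem).deriv]
          exact (hsign z hzmem).1 hz.2.le
      exact hmono ⟨le_refl y, hcase⟩ ⟨hcase, le_refl _⟩ hcase
    · have hsub : Set.Icc (ξ / s) y ⊆ Set.Ioo (0:ℝ) 1 := fun z hz =>
        ⟨lt_of_lt_of_le hxmem.1 hz.1, lt_of_le_of_lt hz.2 hy1⟩
      have hanti : AntitoneOn g (Set.Icc (ξ / s) y) := by
        apply antitoneOn_of_deriv_nonpos (convex_Icc _ _)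
        · exact fun z hz => ((hderiv z (hsub hz)).continuousAt).continuousWithinAt
        · intro z hz
          rw [interior_Icc] at hz
          exact ((hderiv z (hsub ⟨hz.1.le, hz.2.le⟩)).differentiableAt).differentiableWithinAt
        · intro z hz
          rw [interior_Icc] at hz
          have hzmem := hsub ⟨hz.1.le, hz.2.le⟩
          rw [(hderiv z hzmem).deriv]
          exact (hsign z hzmem).2 hz.1.le
      exact hanti ⟨le_refl _, hcase⟩ ⟨hcase, le_refl y⟩ hcase
  -- value at maximum
  have hsξ : (0:ℝ) < s - ξ := by linarith
  have hsξ' : (0:ℝ) < s + ξ := by linarith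
  have hval : g (ξ / s) = Real.log ((ξ + s) ^ 2 / 4) := by
    have hlog4 : Real.log 4 = 2 * Real.log 2 := by
      rw [show (4:ℝ) = 2 ^ 2 by norm_num, Real.log_pow]
      push_cast; ring
    have e1 : 1 + ξ / s = (s + ξ) / s := by field_simp
    have e2 : 1 - ξ / s = (s - ξ) / s := by field_simp
    have e4 : (1:ℝ) - ξ ^ 2 = (s - ξ) * (s + ξ) / 4 := by nlinarith [hs2]
    have l1 : Real.log (ξ ^ 2) = 2 * Real.log ξ := by
      rw [Real.log_pow]; push_cast; ring
    have l2 : Real.log (1 - ξ ^ 2)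
        = Real.log (s - ξ) + Real.log (s + ξ) - 2 * Real.log 2 := by
      rw [e4, Real.log_div (by positivity) (by norm_num),
        Real.log_mul hsξ.ne' hsξ'.ne', hlog4]
    have l3 : Real.log (1 + ξ / s) = Real.log (s + ξ) - Real.log s := by
      rw [e1, Real.log_div hsξ'.ne' hspos.ne']
    have l4 : Real.log (1 - ξ / s) = Real.log (s - ξ) - Real.log s := by
      rw [e2, Real.log_div hsξ.ne' hspos.ne']
    have l5 : Real.log (2 * (ξ / s)) = Real.log 2 + Real.log ξ - Real.log s := by
      rw [show 2 * (ξ / s) = 2 * ξ / s by ring,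
        Real.log_div (by positivity) hspos.ne', Real.log_mul two_ne_zero hξ0.ne']
    have lr : Real.log ((ξ + s) ^ 2 / 4)
        = 2 * Real.log (s + ξ) - 2 * Real.log 2 := by
      rw [show ξ + s = s + ξ by ring, Real.log_div (by positivity) (by norm_num),
        Real.log_pow, hlog4]
      push_cast; ring
    rw [hg, l1, l2, l3, l4, l5, lr]
    field_simp
    ring
  -- positivity
  have hgt : (2:ℝ) < ξ + s := by nlinarith [hs2]
  have hpos : 0 < Real.log ((ξ + s) ^ 2 / 4) := by
    apply Real.log_pos
    rw [lt_div_iff₀ (by norm_num : (0:ℝ) < 4)]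
    nlinarith
  exact ⟨hxmem, hmax, hval, hpos⟩
end
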